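/- Let M be a finite rank-4 matroid and let T₁, T₂, T₃ be rank-2 flats of M with r(T₁∪T₂∪T₃) = 4 and r(Tᵢ∪Tⱼ) = 3 for all i ≠ j. If cl(T₁∪T₂) ∩ T₃ ≠ ∅, then cl(T₁∪T₂) ∩ T₃ ⊆ T₁ and cl(T₁∪T₂) ∩ T₃ ⊆ T₂. -/

import Mathlib

open Set Matroid
open scoped Matroid

namespace SMC

variable {α : Type*}

/-- The rank of a set `X` in a matroid `M`: the maximum cardinality of an
independent subset of `X` (intended for finite matroids). -/
noncomputable def rk (M : Matroid α) (X : Set α) : ℕ :=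
  sSup {n | ∃ I, M.Indep I ∧ I ⊆ X ∧ I.ncard = n}

/-- The rank of a matroid: the rank of its ground set. -/
noncomputable def rkM (M : Matroid α) : ℕ := rk M M.E

/-- The modular defect of a pair of sets:
`r(X) + r(Y) - r(X ∪ Y) - r(X ∩ Y)` (a natural number). -/
noncomputable def pairDefect (M : Matroid α) (X Y : Set α) : ℕ :=
  rk M X + rk M Y - rk M (X ∪ Y) - rk M (X ∩ Y)

/-- A pair of sets is a modular pair if its modular defect is zero. -/
def ModularPair (M : Matroid α) (X Y : Set α) : Prop := pairDefect M X Y = 0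

/-- A matroid is modular if every pair of flats is a modular pair. -/
def Modular (M : Matroid α) : Prop :=
  ∀ F L : Set α, M.IsFlat F → M.IsFlat L → ModularPair M F L

/-- A matroid (of rank at least 3) is hypermodular if every pair of flats of
rank `r(M) - 1` is a modular pair. -/
def Hypermodular (M : Matroid α) : Prop :=
  ∀ F L : Set α, M.IsFlat F → M.IsFlat L →
    rk M F + 1 = rkM M → rk M L + 1 = rkM M → ModularPair M F L

/-- A modular cut of `M`: a collection of flats that is upward closed and
closed under intersections of modular pairs. -/
def ModularCut (M : Matroid α) (𝓜 : Set (Set α)) : Prop :=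
  (∀ F ∈ 𝓜, M.IsFlat F) ∧
  (∀ L ∈ 𝓜, ∀ F : Set α, M.IsFlat F → L ⊆ F → F ∈ 𝓜) ∧
  (∀ F ∈ 𝓜, ∀ L ∈ 𝓜, ModularPair M F L → F ∩ L ∈ 𝓜)

/-- A principal modular cut: the collection of all flats containing some fixed flat. -/
def PrincipalCut (M : Matroid α) (𝓜 : Set (Set α)) : Prop :=
  ∃ F : Set α, M.IsFlat F ∧ 𝓜 = {L | M.IsFlat L ∧ F ⊆ L}

/-- The modular cut generated by a collection `S` of flats:
the smallest modular cut containing `S`. -/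
def genCut (M : Matroid α) (S : Set (Set α)) : Set (Set α) :=
  ⋂₀ {𝓜 | ModularCut M 𝓜 ∧ S ⊆ 𝓜}

/-- A Vámos line arrangement in a rank-4 matroid: four pairwise disjoint rank-2
flats, the union of any three of which has rank 4, with `r(T₀ ∪ T₁) = 3`,
`r(Tᵢ ∪ Lⱼ) = 3` for all `i, j`, and `r(L₀ ∪ L₁) = 4`. -/
def VamosQuad (M : Matroid α) (T₀ T₁ L₀ L₁ : Set α) : Prop :=
  M.IsFlat T₀ ∧ M.IsFlat T₁ ∧ M.IsFlat L₀ ∧ M.IsFlat L₁ ∧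
  rk M T₀ = 2 ∧ rk M T₁ = 2 ∧ rk M L₀ = 2 ∧ rk M L₁ = 2 ∧
  Disjoint T₀ T₁ ∧ Disjoint T₀ L₀ ∧ Disjoint T₀ L₁ ∧
  Disjoint T₁ L₀ ∧ Disjoint T₁ L₁ ∧ Disjoint L₀ L₁ ∧
  rk M (T₀ ∪ T₁ ∪ L₀) = 4 ∧ rk M (T₀ ∪ T₁ ∪ L₁) = 4 ∧
  rk M (T₀ ∪ L₀ ∪ L₁) = 4 ∧ rk M (T₁ ∪ L₀ ∪ L₁) = 4 ∧
  rk M (T₀ ∪ T₁) = 3 ∧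
  rk M (T₀ ∪ L₀) = 3 ∧ rk M (T₀ ∪ L₁) = 3 ∧
  rk M (T₁ ∪ L₀) = 3 ∧ rk M (T₁ ∪ L₁) = 3 ∧
  rk M (L₀ ∪ L₁) = 4

/-- The modular defect of a matroid: the sum of the modular defects of all
unordered pairs of flats (the sum over ordered pairs is twice this). -/
noncomputable def matroidDefect (M : Matroid α) : ℕ :=
  (∑ᶠ F ∈ {F | M.IsFlat F}, ∑ᶠ L ∈ {L | M.IsFlat L}, pairDefect M F L) / 2



section Aux

variable {M : Matroid α} {I J X Y : Set α}

lemma indep_ncard_le_of_basis' (hfin : M.E.Finite) (hJ : M.Indep J) (hJX : J ⊆ X)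
    (hI : M.IsBasis' I X) : J.ncard ≤ I.ncard := by
  obtain ⟨J', hJ', hJJ'⟩ := hJ.subset_isBasis'_of_subset hJX
  have hcard := hJ'.encard_eq_encard hI
  have hJ'fin : J'.Finite := hfin.subset hJ'.indep.subset_ground
  calc J.ncard ≤ J'.ncard := Set.ncard_le_ncard hJJ' hJ'fin
    _ = I.ncard := by rw [Set.ncard_def, Set.ncard_def, hcard]

lemma rk_eq_ncard_of_basis' (hfin : M.E.Finite) (hI : M.IsBasis' I X) :
    rk M X = I.ncard := by
  apply IsGreatest.csSup_eq
  refine ⟨⟨I, hI.indep, hI.subset, rfl⟩, ?_⟩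
  rintro n ⟨J, hJ, hJX, rfl⟩
  exact indep_ncard_le_of_basis' hfin hJ hJX hI

lemma rk_mono (hfin : M.E.Finite) (hXY : X ⊆ Y) : rk M X ≤ rk M Y := by
  obtain ⟨I, hI⟩ := M.exists_isBasis' X
  obtain ⟨J, hJ⟩ := M.exists_isBasis' Y
  rw [rk_eq_ncard_of_basis' hfin hI, rk_eq_ncard_of_basis' hfin hJ]
  exact indep_ncard_le_of_basis' hfin hI.indep (hI.subset.trans hXY) hJ

lemma rk_closure_eq (hfin : M.E.Finite) (X : Set α) : rk M (M.closure X) = rk M X := by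
  obtain ⟨I, hI⟩ := M.exists_isBasis' X
  rw [rk_eq_ncard_of_basis' hfin hI.isBasis_closure_right.isBasis',
    rk_eq_ncard_of_basis' hfin hI]

/-- The one-sided key step. -/
lemma key_step {T₁ T₂ T₃ : Set α} (hfin : M.E.Finite)
    (h₁ : M.IsFlat T₁) (hT₂E : T₂ ⊆ M.E) (hT₃E : T₃ ⊆ M.E)
    (hr₁ : rk M T₁ = 2)
    (hall : rk M (T₁ ∪ T₂ ∪ T₃) = 4)
    (h₁₂ : rk M (T₁ ∪ T₂) = 3) (h₁₃ : rk M (T₁ ∪ T₃) = 3)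
    {x : α} (hx : x ∈ M.closure (T₁ ∪ T₂) ∩ T₃) : x ∈ T₁ := by
  by_contra hxT₁
  obtain ⟨hxcl, hxT₃⟩ := hx
  have hT₁E : T₁ ⊆ M.E := h₁.subset_ground
  have hxE : x ∈ M.E := M.closure_subset_ground _ hxcl
  obtain ⟨I, hI⟩ := M.exists_isBasis' T₁
  have hIcard : I.ncard = 2 := by rw [← rk_eq_ncard_of_basis' hfin hI, hr₁]
  have hIfin : I.Finite := hfin.subset hI.indep.subset_ground
  have hxI : x ∉ I := fun h => hxT₁ (hI.subset h)
  have hxclI : x ∉ M.closure I := by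
    rw [hI.closure_eq_closure, h₁.closure]; exact hxT₁
  have hind : M.Indep (insert x I) :=
    (hI.indep.insert_indep_iff_of_notMem hxI).mpr ⟨hxE, hxclI⟩
  have hsub13 : insert x I ⊆ T₁ ∪ T₃ :=
    Set.insert_subset (Set.mem_union_right _ hxT₃) (hI.subset.trans Set.subset_union_left)
  obtain ⟨J, hJ, hJsub⟩ := hind.subset_isBasis'_of_subset hsub13
  have hJcard : J.ncard = 3 := by rw [← rk_eq_ncard_of_basis' hfin hJ, h₁₃]
  have hJfin : J.Finite := hfin.subset hJ.indep.subset_ground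
  have hicard : (insert x I).ncard = 3 := by
    rw [Set.ncard_insert_of_notMem hxI hIfin, hIcard]
  have heq : insert x I = J :=
    Set.eq_of_subset_of_ncard_le hJsub (by rw [hJcard, hicard]) hJfin
  have hclins : M.closure (insert x I) = M.closure (T₁ ∪ T₃) := by
    rw [heq, hJ.closure_eq_closure]
  have hins_sub : insert x I ⊆ M.closure (T₁ ∪ T₂) :=
    Set.insert_subset hxcl (fun a ha =>
      M.subset_closure (T₁ ∪ T₂) (Set.union_subset hT₁E hT₂E)
        (Set.mem_union_left _ (hI.subset ha)))
  have hT₃sub : T₃ ⊆ M.closure (T₁ ∪ T₂) := by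
    refine Set.Subset.trans ?_
      (M.closure_subset_closure_of_subset_closure hins_sub)
    rw [hclins]
    exact Set.Subset.trans Set.subset_union_right
      (M.subset_closure (T₁ ∪ T₃) (Set.union_subset hT₁E hT₃E))
  have hbig : T₁ ∪ T₂ ∪ T₃ ⊆ M.closure (T₁ ∪ T₂) :=
    Set.union_subset (M.subset_closure (T₁ ∪ T₂) (Set.union_subset hT₁E hT₂E)) hT₃sub
  have hle : rk M (T₁ ∪ T₂ ∪ T₃) ≤ 3 := by
    have := rk_mono hfin hbig (M := M)
    rwa [rk_closure_eq hfin, h₁₂] at this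
  omega

end Aux

/-- In a finite rank-4 matroid, if T₁, T₂, T₃ are rank-2 flats
with r(T₁ ∪ T₂ ∪ T₃) = 4 and r(Tᵢ ∪ Tⱼ) = 3 for i ≠ j, and
cl(T₁ ∪ T₂) ∩ T₃ ≠ ∅, then cl(T₁ ∪ T₂) ∩ T₃ ⊆ T₁ and cl(T₁ ∪ T₂) ∩ T₃ ⊆ T₂. -/
theorem statement_12 {α : Type*} (M : Matroid α) (hfin : M.E.Finite)
    (hrk : rkM M = 4) (T₁ T₂ T₃ : Set α)
    (h₁ : M.IsFlat T₁) (h₂ : M.IsFlat T₂) (h₃ : M.IsFlat T₃)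
    (hr₁ : rk M T₁ = 2) (hr₂ : rk M T₂ = 2) (hr₃ : rk M T₃ = 2)
    (hall : rk M (T₁ ∪ T₂ ∪ T₃) = 4)
    (h₁₂ : rk M (T₁ ∪ T₂) = 3) (h₁₃ : rk M (T₁ ∪ T₃) = 3)
    (h₂₃ : rk M (T₂ ∪ T₃) = 3)
    (hne : (M.closure (T₁ ∪ T₂) ∩ T₃).Nonempty) :
    M.closure (T₁ ∪ T₂) ∩ T₃ ⊆ T₁ ∧ M.closure (T₁ ∪ T₂) ∩ T₃ ⊆ T₂ := by
  constructor
  · intro x hx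
    exact key_step hfin h₁ h₂.subset_ground h₃.subset_ground hr₁ hall h₁₂ h₁₃ hx
  · intro x hx
    have hx' : x ∈ M.closure (T₂ ∪ T₁) ∩ T₃ := by rwa [Set.union_comm T₂ T₁]
    refine key_step hfin h₂ h₁.subset_ground h₃.subset_ground hr₂ ?_ (by rwa [Set.union_comm]) h₂₃ hx'
    have : T₂ ∪ T₁ ∪ T₃ = T₁ ∪ T₂ ∪ T₃ := by
      rw [Set.union_comm T₂ T₁]
    rw [this, hall]

end SMC
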